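/- For all integers s, r ≥ 1 there exists an integer m ≥ 1 such that the graph Q_{s,r} is a minor of the shallow vortex grid H_m. -/

import Mathlib

/-- `H` is a minor of `G`: there is a family of pairwise disjoint branch sets in `G`,
each inducing a connected subgraph, such that every edge of `H` is realized between
the corresponding branch sets. -/
def IsMinorOf {V W : Type*} (H : SimpleGraph V) (G : SimpleGraph W) : Prop :=
  ∃ X : V → Set W,
    (∀ v : V, (G.induce (X v)).Connected) ∧
    (∀ u v : V, u ≠ v → Disjoint (X u) (X v)) ∧
    (∀ u v : V, H.Adj u v → ∃ a ∈ X u, ∃ b ∈ X v, G.Adj a b)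

/-- The shallow vortex grid `H_k`: `k` concentric cycles of length `2k`,
vertical edges between consecutive cycles, and chords `j ↦ j+2` on the first cycle. -/
def shallowVortexGrid (k : ℕ) : SimpleGraph (Fin k × ZMod (2 * k)) :=
  SimpleGraph.fromRel fun p q =>
    (p.1 = q.1 ∧ q.2 = p.2 + 1) ∨
    (p.2 = q.2 ∧ (q.1 : ℕ) = (p.1 : ℕ) + 1) ∨
    ((p.1 : ℕ) = 0 ∧ (q.1 : ℕ) = 0 ∧ q.2 = p.2 + 2)

/-- The graph `Q_{s,r}`: the `(s × (s·r))`-grid together with `2r` terminal vertices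
`t_i, t_i'` (encoded as `(i, 0)` and `(i, 1)`), where for each `i` both `t_i` and `t_i'`
are joined to the `i`-th block of `s` consecutive vertices of the first row. -/
def Qgraph (s r : ℕ) : SimpleGraph ((Fin s × Fin (s * r)) ⊕ (Fin r × Fin 2)) :=
  SimpleGraph.fromRel fun x y =>
    match x, y with
    | Sum.inl a, Sum.inl b =>
        (a.1 = b.1 ∧ (b.2 : ℕ) = (a.2 : ℕ) + 1) ∨ (a.2 = b.2 ∧ (b.1 : ℕ) = (a.1 : ℕ) + 1)
    | Sum.inr u, Sum.inl a =>
        (a.1 : ℕ) = 0 ∧ (u.1 : ℕ) * s ≤ (a.2 : ℕ) ∧ (a.2 : ℕ) < (u.1 : ℕ) * s + s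
    | _, _ => False

private lemma natCast_zmod_ne {n a b : ℕ} [NeZero n] (ha : a < n) (hb : b < n)
    (hab : a ≠ b) : (a : ZMod n) ≠ (b : ZMod n) := by
  intro h
  apply hab
  have := congrArg ZMod.val h
  rwa [ZMod.val_cast_of_lt ha, ZMod.val_cast_of_lt hb] at this

private lemma natCast_zmod_inj {n a b : ℕ} [NeZero n] (ha : a < n) (hb : b < n)
    (h : (a : ZMod n) = (b : ZMod n)) : a = b := by
  by_contra hab; exact natCast_zmod_ne ha hb hab h

private lemma induce_adj' {W : Type*} {G : SimpleGraph W} {S : Set W} {a b : S}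
    (h : G.Adj a b) : (G.induce S).Adj a b := by
  simpa [SimpleGraph.comap_adj] using h

private lemma connected_of_base {W : Type*} {G : SimpleGraph W} {S : Set W} (w0 : S)
    (h : ∀ w : S, (G.induce S).Reachable w0 w) : (G.induce S).Connected := by
  have : Nonempty S := ⟨w0⟩
  exact ⟨fun a b => (h a).symm.trans (h b)⟩

open Fin.NatCast in
/-- For all `s, r ≥ 1` there exists `m ≥ 1` such that `Q_{s,r}` is a minor of the
shallow vortex grid `H_m`. -/
theorem Qgraph_isMinor_shallowVortexGrid (s r : ℕ) (hs : 1 ≤ s) (hr : 1 ≤ r) :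
    ∃ m : ℕ, 1 ≤ m ∧ IsMinorOf (Qgraph s r) (shallowVortexGrid m) := by
  obtain ⟨m, hm⟩ : ∃ m : ℕ, m = s * r + s + 1 := ⟨_, rfl⟩
  haveI : NeZero m := ⟨by omega⟩
  haveI : NeZero (2 * m) := ⟨by omega⟩
  refine ⟨m, by omega, ?_⟩
  refine ⟨fun v => match v with
    | Sum.inl a => { p : Fin m × ZMod (2*m) | (p.1 : ℕ) = (a.1 : ℕ) + 1 ∧
        (p.2 = ((2*(a.2 : ℕ) : ℕ) : ZMod (2*m)) ∨ p.2 = ((2*(a.2 : ℕ)+1 : ℕ) : ZMod (2*m))) }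
    | Sum.inr u => { p : Fin m × ZMod (2*m) | (p.1 : ℕ) = 0 ∧
        ∃ t : ℕ, (u.1 : ℕ)*s ≤ t ∧ t < (u.1 : ℕ)*s + s ∧
          p.2 = ((2*t+(u.2 : ℕ) : ℕ) : ZMod (2*m)) },
    ?_, ?_, ?_⟩
  · -- connectivity
    rintro (⟨i, j⟩ | ⟨i, e⟩)
    · -- grid vertex : two adjacent vertices
      have hj := j.isLt
      have hi := i.isLt
      have hi1 : (i : ℕ) + 1 < m := by omega
      have hb0 : 2*(j : ℕ) < 2*m := by omega
      have hb1 : 2*(j : ℕ)+1 < 2*m := by omega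
      set S : Set (Fin m × ZMod (2*m)) :=
        { p : Fin m × ZMod (2*m) | (p.1 : ℕ) = (i : ℕ) + 1 ∧
          (p.2 = ((2*(j : ℕ) : ℕ) : ZMod (2*m)) ∨ p.2 = ((2*(j : ℕ)+1 : ℕ) : ZMod (2*m))) }
        with hS
      show ((shallowVortexGrid m).induce S).Connected
      have hmem0 : ((((i : ℕ)+1 : ℕ) : Fin m), ((2*(j : ℕ) : ℕ) : ZMod (2*m))) ∈ S :=
        ⟨Fin.val_cast_of_lt hi1, Or.inl rfl⟩
      refine connected_of_base ⟨_, hmem0⟩ ?_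
      rintro ⟨⟨p1, p2⟩, hp⟩
      obtain ⟨h1, h2 | h2⟩ := hp
      · have : (⟨(p1, p2), ⟨h1, Or.inl h2⟩⟩ : ↥S) = ⟨_, hmem0⟩ := by
          apply Subtype.ext
          exact Prod.ext (Fin.ext (by rw [h1, Fin.val_cast_of_lt hi1])) h2
        rw [this]
      · refine (SimpleGraph.Adj.reachable (induce_adj' ?_))
        rw [shallowVortexGrid, SimpleGraph.fromRel_adj]
        constructor
        · intro hcontra
          have := congrArg Prod.snd hcontra
          simp only at this
          exact natCast_zmod_ne hb0 hb1 (by omega) (this.trans h2)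
        · refine Or.inl (Or.inl ⟨?_, ?_⟩)
          · exact Fin.ext (by rw [Fin.val_cast_of_lt hi1, h1])
          · rw [h2]; push_cast; ring
    · -- terminal vertex : chord path
      have hi := i.isLt
      have he := e.isLt
      have hmul : ((i : ℕ)+1)*s ≤ r*s := Nat.mul_le_mul_right s (by omega)
      have hsm : ((i : ℕ)+1)*s = (i : ℕ)*s + s := by ring
      have hrs : r*s = s*r := Nat.mul_comm r s
      set S : Set (Fin m × ZMod (2*m)) :=
        { p : Fin m × ZMod (2*m) | (p.1 : ℕ) = 0 ∧
          ∃ t : ℕ, (i : ℕ)*s ≤ t ∧ t < (i : ℕ)*s + s ∧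
            p.2 = ((2*t+(e : ℕ) : ℕ) : ZMod (2*m)) } with hS
      show ((shallowVortexGrid m).induce S).Connected
      set w : ℕ → Fin m × ZMod (2*m) :=
        fun t => ((0 : Fin m), ((2*t+(e : ℕ) : ℕ) : ZMod (2*m))) with hw
      have hmem : ∀ t : ℕ, (i : ℕ)*s ≤ t → t < (i : ℕ)*s + s → w t ∈ S := by
        intro t h1 h2
        exact ⟨by simp [hw], t, h1, h2, rfl⟩
      have hbt : ∀ t : ℕ, t < (i : ℕ)*s + s → 2*t+(e : ℕ) < 2*m := by
        intro t ht; omega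
      have w0mem : w ((i : ℕ)*s) ∈ S := hmem _ le_rfl (by omega)
      have step : ∀ (n : ℕ) (hn1 : (i : ℕ)*s ≤ n) (hn2 : n+1 < (i : ℕ)*s + s),
          ((shallowVortexGrid m).induce S).Adj
            ⟨w n, hmem n hn1 (by omega)⟩ ⟨w (n+1), hmem (n+1) (by omega) hn2⟩ := by
        intro n hn1 hn2
        refine induce_adj' ?_
        rw [shallowVortexGrid, SimpleGraph.fromRel_adj]
        constructor
        · intro hcontra
          have := congrArg Prod.snd hcontra
          simp only [hw] at this
          exact natCast_zmod_ne (hbt n (by omega)) (hbt (n+1) (by omega)) (by omega) this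
        · refine Or.inl (Or.inr (Or.inr ⟨?_, ?_, ?_⟩))
          · simp [hw]
          · simp [hw]
          · show ((2*(n+1)+(e : ℕ) : ℕ) : ZMod (2*m)) = ((2*n+(e : ℕ) : ℕ) : ZMod (2*m)) + 2
            push_cast; ring
      have reach : ∀ t' (h1' : (i : ℕ)*s ≤ t') (h2' : t' < (i : ℕ)*s + s),
          ((shallowVortexGrid m).induce S).Reachable ⟨w ((i : ℕ)*s), w0mem⟩
            ⟨w t', hmem t' h1' h2'⟩ := by
        intro t' h1' h2'
        induction t', h1' using Nat.le_induction with
        | base => exact SimpleGraph.Reachable.refl _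
        | succ n hn ih =>
            exact (ih (by omega)).trans (SimpleGraph.Adj.reachable (step n hn h2'))
      refine connected_of_base ⟨w ((i : ℕ)*s), w0mem⟩ ?_
      rintro ⟨⟨p1, p2⟩, hp⟩
      obtain ⟨h1, t, ht1, ht2, hp2⟩ := hp
      have hwp : (⟨(p1, p2), ⟨h1, t, ht1, ht2, hp2⟩⟩ : ↥S) = ⟨w t, hmem t ht1 ht2⟩ := by
        apply Subtype.ext
        exact Prod.ext (Fin.ext (by simpa [hw] using h1)) hp2
      rw [hwp]
      exact reach t ht1 ht2
  · -- disjointness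
    rintro (⟨i, j⟩ | ⟨i, e⟩) (⟨i', j'⟩ | ⟨i', e'⟩) huv <;>
      rw [Set.disjoint_left] <;> rintro ⟨p1, p2⟩ hp hq <;>
      dsimp only [Set.mem_setOf_eq] at hp hq
    · obtain ⟨h1, h2⟩ := hp
      obtain ⟨h1', h2'⟩ := hq
      have hb : ∀ a : Fin (s*r), 2*(a : ℕ)+1 < 2*m := fun a => by have := a.isLt; omega
      have hne : ¬((i : ℕ) = (i' : ℕ) ∧ (j : ℕ) = (j' : ℕ)) := by
        rintro ⟨a, b⟩
        exact huv (congrArg Sum.inl (Prod.ext (Fin.ext a) (Fin.ext b)))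
      rcases h2 with h2 | h2 <;> rcases h2' with h2' | h2' <;>
        have := natCast_zmod_inj (by have := hb j; omega) (by have := hb j'; omega)
          (h2.symm.trans h2') <;> omega
    · obtain ⟨h1, _⟩ := hp
      obtain ⟨h1', _⟩ := hq
      omega
    · obtain ⟨h1, _⟩ := hp
      obtain ⟨h1', _⟩ := hq
      omega
    · obtain ⟨h1, t, ht1, ht2, hp2⟩ := hp
      obtain ⟨h1', t', ht1', ht2', hp2'⟩ := hq
      have hi := i.isLt; have hi' := i'.isLt
      have he := e.isLt; have he' := e'.isLt
      have hm1 : ((i : ℕ)+1)*s ≤ r*s := Nat.mul_le_mul_right s (by omega)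
      have hm1' : ((i' : ℕ)+1)*s ≤ r*s := Nat.mul_le_mul_right s (by omega)
      have hsm : ((i : ℕ)+1)*s = (i : ℕ)*s + s := by ring
      have hsm' : ((i' : ℕ)+1)*s = (i' : ℕ)*s + s := by ring
      have hrs : r*s = s*r := Nat.mul_comm r s
      have heq : 2*t+(e : ℕ) = 2*t'+(e' : ℕ) :=
        natCast_zmod_inj (by omega) (by omega) (hp2.symm.trans hp2')
      have hne : ¬((i : ℕ) = (i' : ℕ) ∧ (e : ℕ) = (e' : ℕ)) := by
        rintro ⟨a, b⟩
        exact huv (congrArg Sum.inr (Prod.ext (Fin.ext a) (Fin.ext b)))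
      -- parity gives e = e', hence i ≠ i', and blocks are disjoint
      have he'' : (e : ℕ) = (e' : ℕ) := by omega
      have hii : (i : ℕ) ≠ (i' : ℕ) := fun a => hne ⟨a, he''⟩
      have hkey : ((i : ℕ)+1)*s ≤ (i' : ℕ)*s ∨ ((i' : ℕ)+1)*s ≤ (i : ℕ)*s := by
        rcases Nat.lt_or_ge (i : ℕ) (i' : ℕ) with h | h
        · exact Or.inl (Nat.mul_le_mul_right s (by omega))
        · exact Or.inr (Nat.mul_le_mul_right s (by omega))
      omega
  · -- edges
    have hbj : ∀ a : Fin (s*r), 2*(a : ℕ)+1 < 2*m := fun a => by have := a.isLt; omega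
    have hbi : ∀ a : Fin s, (a : ℕ)+1 < m := fun a => by have := a.isLt; omega
    have gridCore : ∀ (a b : Fin s) (c d : Fin (s*r)),
        ((a = b ∧ (d : ℕ) = (c : ℕ)+1) ∨ (c = d ∧ (b : ℕ) = (a : ℕ)+1)) →
        ∃ x, ((x : Fin m × ZMod (2*m)).1 : ℕ) = (a : ℕ) + 1 ∧
          (x.2 = ((2*(c : ℕ) : ℕ) : ZMod (2*m)) ∨ x.2 = ((2*(c : ℕ)+1 : ℕ) : ZMod (2*m))) ∧
        ∃ y, ((y : Fin m × ZMod (2*m)).1 : ℕ) = (b : ℕ) + 1 ∧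
          (y.2 = ((2*(d : ℕ) : ℕ) : ZMod (2*m)) ∨ y.2 = ((2*(d : ℕ)+1 : ℕ) : ZMod (2*m))) ∧
          (shallowVortexGrid m).Adj x y := by
      rintro a b c d (⟨hab, hcd⟩ | ⟨hcd, hab⟩)
      · -- horizontal
        refine ⟨((((a : ℕ)+1 : ℕ) : Fin m), ((2*(c : ℕ)+1 : ℕ) : ZMod (2*m))),
          Fin.val_cast_of_lt (hbi a), Or.inr rfl,
          ((((b : ℕ)+1 : ℕ) : Fin m), ((2*(d : ℕ) : ℕ) : ZMod (2*m))),
          Fin.val_cast_of_lt (hbi b), Or.inl rfl, ?_⟩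
        rw [shallowVortexGrid, SimpleGraph.fromRel_adj]
        constructor
        · intro hcontra
          have := congrArg Prod.snd hcontra
          simp only at this
          exact natCast_zmod_ne (by have := hbj c; omega) (by have := hbj d; omega)
            (by omega) this
        · refine Or.inl (Or.inl ⟨by rw [hab], ?_⟩)
          show ((2*(d : ℕ) : ℕ) : ZMod (2*m)) = ((2*(c : ℕ)+1 : ℕ) : ZMod (2*m)) + 1
          rw [hcd]; push_cast; ring
      · -- vertical
        refine ⟨((((a : ℕ)+1 : ℕ) : Fin m), ((2*(c : ℕ) : ℕ) : ZMod (2*m))),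
          Fin.val_cast_of_lt (hbi a), Or.inl rfl,
          ((((b : ℕ)+1 : ℕ) : Fin m), ((2*(d : ℕ) : ℕ) : ZMod (2*m))),
          Fin.val_cast_of_lt (hbi b), Or.inl rfl, ?_⟩
        rw [shallowVortexGrid, SimpleGraph.fromRel_adj]
        constructor
        · intro hcontra
          have := congrArg (fun z : Fin m × ZMod (2*m) => (z.1 : ℕ)) hcontra
          simp only [Fin.val_cast_of_lt (hbi a), Fin.val_cast_of_lt (hbi b)] at this
          omega
        · refine Or.inl (Or.inr (Or.inl ⟨by rw [hcd], ?_⟩))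
          show ((((b : ℕ)+1 : ℕ) : Fin m) : ℕ) = ((((a : ℕ)+1 : ℕ) : Fin m) : ℕ) + 1
          rw [Fin.val_cast_of_lt (hbi a), Fin.val_cast_of_lt (hbi b), hab]
    have termCore : ∀ (u1 : Fin r) (u2 : Fin 2) (a1 : Fin s) (a2 : Fin (s*r)),
        (a1 : ℕ) = 0 → (u1 : ℕ)*s ≤ (a2 : ℕ) → (a2 : ℕ) < (u1 : ℕ)*s + s →
        ∃ x, (((x : Fin m × ZMod (2*m)).1 : ℕ) = 0 ∧
          ∃ t : ℕ, (u1 : ℕ)*s ≤ t ∧ t < (u1 : ℕ)*s + s ∧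
            x.2 = ((2*t+(u2 : ℕ) : ℕ) : ZMod (2*m))) ∧
        ∃ y, (((y : Fin m × ZMod (2*m)).1 : ℕ) = (a1 : ℕ) + 1 ∧
          (y.2 = ((2*(a2 : ℕ) : ℕ) : ZMod (2*m)) ∨
           y.2 = ((2*(a2 : ℕ)+1 : ℕ) : ZMod (2*m)))) ∧
          (shallowVortexGrid m).Adj x y := by
      intro u1 u2 a1 a2 h0 hlo hhi
      refine ⟨((0 : Fin m), ((2*(a2 : ℕ)+(u2 : ℕ) : ℕ) : ZMod (2*m))),
        ⟨by simp, a2, hlo, hhi, rfl⟩,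
        ((((a1 : ℕ)+1 : ℕ) : Fin m), ((2*(a2 : ℕ)+(u2 : ℕ) : ℕ) : ZMod (2*m))),
        ⟨Fin.val_cast_of_lt (hbi a1), ?_⟩, ?_⟩
      · have : (u2 : ℕ) = 0 ∨ (u2 : ℕ) = 1 := by have := u2.isLt; omega
        rcases this with h | h
        · exact Or.inl (by rw [h]; norm_num)
        · exact Or.inr (by rw [h])
      · rw [shallowVortexGrid, SimpleGraph.fromRel_adj]
        constructor
        · intro hcontra
          have := congrArg (fun z : Fin m × ZMod (2*m) => (z.1 : ℕ)) hcontra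
          simp only [Fin.val_cast_of_lt (hbi a1)] at this
          simp at this
        · refine Or.inl (Or.inr (Or.inl ⟨rfl, ?_⟩))
          show ((((a1 : ℕ)+1 : ℕ) : Fin m) : ℕ) = ((0 : Fin m) : ℕ) + 1
          rw [Fin.val_cast_of_lt (hbi a1), h0]
          simp
    rintro (⟨i, j⟩ | ⟨i, e⟩) (⟨i', j'⟩ | ⟨i', e'⟩) huv <;>
      rw [Qgraph, SimpleGraph.fromRel_adj] at huv <;> obtain ⟨hne, hrel⟩ := huv
    · rcases hrel with h | h
      · obtain ⟨x, hx1, hx2, y, hy1, hy2, hxy⟩ := gridCore i i' j j' h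
        exact ⟨x, ⟨hx1, hx2⟩, y, ⟨hy1, hy2⟩, hxy⟩
      · obtain ⟨x, hx1, hx2, y, hy1, hy2, hxy⟩ := gridCore i' i j' j h
        exact ⟨y, ⟨hy1, hy2⟩, x, ⟨hx1, hx2⟩, hxy.symm⟩
    · rcases hrel with h | h
      · exact h.elim
      · obtain ⟨h0, hlo, hhi⟩ := h
        obtain ⟨x, hx, y, hy, hxy⟩ := termCore i' e' i j h0 hlo hhi
        exact ⟨y, hy, x, hx, hxy.symm⟩
    · rcases hrel with h | h
      · obtain ⟨h0, hlo, hhi⟩ := h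
        obtain ⟨x, hx, y, hy, hxy⟩ := termCore i e i' j' h0 hlo hhi
        exact ⟨x, hx, y, hy, hxy⟩
      · exact h.elim
    · rcases hrel with h | h <;> exact h.elim
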